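/- Let 𝔯 be a topologically semiperfect complete, separated, right linear topological ring, 𝔥 = 𝔥(𝔯) its topological Jacobson radical, and 𝔰 = 𝔯/𝔥 the quotient ring endowed with the quotient topology. Let (g_z)_{z∈Z} be a zero-convergent family of primitive idempotents in 𝔰. Then there exists a zero-convergent family (e_z)_{z∈Z} of local idempotents in 𝔯 such that the image of e_z in 𝔰 equals g_z for every z ∈ Z. -/

import Mathlib

open Filter MulOpposite

universe u

/-- The corner ring `eRe` of an idempotent `e` is a local ring: `e` is idempotent, nonzero,
and every element `exe` of the corner ring is invertible in `eRe` (with unit `e`),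
or `e - exe` is. -/
def IsLocalIdempotent {R : Type*} [Ring R] (e : R) : Prop :=
  IsIdempotentElem e ∧ e ≠ 0 ∧
    ∀ x : R,
      (∃ y : R, e * x * e * (e * y * e) = e ∧ e * y * e * (e * x * e) = e) ∨
      (∃ y : R, (e - e * x * e) * (e * y * e) = e ∧ e * y * e * (e - e * x * e) = e)

/-- Open right ideals form a base of neighborhoods of zero. -/
def IsRightLinearTopology (R : Type u) [Ring R] [TopologicalSpace R] : Prop :=
  ∀ s ∈ nhds (0 : R), ∃ I : Submodule Rᵐᵒᵖ R, IsOpen (I : Set R) ∧ (I : Set R) ⊆ s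

/-- A topological ring is topologically semiperfect if there is a zero-convergent family of
pairwise orthogonal local idempotents summing to `1`. -/
def IsTopSemiperfect (R : Type u) [Ring R] [TopologicalSpace R] : Prop :=
  ∃ (Z : Type u) (e : Z → R),
    Filter.Tendsto e Filter.cofinite (nhds 0) ∧
    (∀ z, IsLocalIdempotent (e z)) ∧
    (∀ z w, z ≠ w → e z * e w = 0) ∧
    HasSum e 1

/-- The topological Jacobson radical: the intersection of all open maximal right ideals. -/
def topJacobson (R : Type u) [Ring R] [TopologicalSpace R] : Set R :=
  ⋂ I ∈ {I : Submodule Rᵐᵒᵖ R | IsOpen (I : Set R) ∧ IsCoatom I}, (I : Set R)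

/-- The abstract Jacobson radical: the intersection of all maximal right ideals. -/
def absJacobson (R : Type u) [Ring R] : Set R :=
  ⋂ I ∈ {I : Submodule Rᵐᵒᵖ R | IsCoatom I}, (I : Set R)

/-- A right module is discrete if the annihilator of each element is open. -/
def IsDiscreteModule (R : Type u) [Ring R] [TopologicalSpace R]
    (N : Type u) [AddCommGroup N] [Module Rᵐᵒᵖ N] : Prop :=
  ∀ n : N, IsOpen {r : R | op r • n = 0}

/-- `N` has a projective cover in the category of all `R₀`-modules. -/
def HasProjCover (R₀ : Type u) [Ring R₀] (N : Type u) [AddCommGroup N] [Module R₀ N] : Prop :=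
  ∃ (P : Type u) (_ : AddCommGroup P) (_ : Module R₀ P) (p : P →ₗ[R₀] N),
    Module.Projective R₀ P ∧ Function.Surjective p ∧
      ∀ K : Submodule R₀ P, K ⊔ LinearMap.ker p = ⊤ → K = ⊤

/-- The finite topology on `End_A(M)^op`: the topology of pointwise convergence,
`M` being discrete; a base of neighborhoods of zero is given by the annihilators of
finite subsets of `M`. -/
def finiteTopologyEnd (A M : Type u) [Ring A] [AddCommGroup M] [Module A M] :
    TopologicalSpace (Module.End A M)ᵐᵒᵖ :=
  TopologicalSpace.induced (fun f (m : M) => f.unop m)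
    (@Pi.topologicalSpace M (fun _ => M) (fun _ => ⊥))

/-- The topological Jacobson radical, as an additive subgroup. -/
def topJacobsonAddSubgroup (R : Type u) [Ring R] [TopologicalSpace R] : AddSubgroup R :=
  ⨅ I ∈ {I : Submodule Rᵐᵒᵖ R | IsOpen (I : Set R) ∧ IsCoatom I}, I.toAddSubgroup

namespace LiftAux

section Basic

variable {R : Type u} [Ring R] [TopologicalSpace R]

theorem mem_topJ {x : R} :
    x ∈ topJacobson R ↔
      ∀ I : Submodule Rᵐᵒᵖ R, IsOpen (I : Set R) → IsCoatom I → x ∈ I := by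
  constructor
  · intro h I hIo hIc
    exact Set.mem_iInter₂.mp h I ⟨hIo, hIc⟩
  · intro h
    exact Set.mem_iInter₂.mpr fun I hI => h I hI.1 hI.2

theorem topJAdd_mem {x : R} :
    x ∈ topJacobsonAddSubgroup R ↔ x ∈ topJacobson R := by
  rw [mem_topJ, topJacobsonAddSubgroup]
  simp only [AddSubgroup.mem_iInf, Submodule.mem_toAddSubgroup, Set.mem_setOf_eq]
  constructor
  · intro h I hIo hIc; exact h I ⟨hIo, hIc⟩
  · intro h I hI; exact h I hI.1 hI.2

theorem eq_top_of_one_mem (N : Submodule Rᵐᵒᵖ R) (h : (1:R) ∈ N) : N = ⊤ := by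
  ext x
  simp only [Submodule.mem_top, iff_true]
  simpa [op_smul_eq_mul] using N.smul_mem (op x) h

theorem J_zero : (0:R) ∈ topJacobson R :=
  mem_topJ.mpr fun I _ _ => I.zero_mem

theorem J_add {a b : R} (ha : a ∈ topJacobson R) (hb : b ∈ topJacobson R) :
    a + b ∈ topJacobson R :=
  mem_topJ.mpr fun I hIo hIc => I.add_mem (mem_topJ.mp ha I hIo hIc) (mem_topJ.mp hb I hIo hIc)

theorem J_neg {a : R} (ha : a ∈ topJacobson R) : -a ∈ topJacobson R :=
  mem_topJ.mpr fun I hIo hIc => I.neg_mem (mem_topJ.mp ha I hIo hIc)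

theorem J_sub {a b : R} (ha : a ∈ topJacobson R) (hb : b ∈ topJacobson R) :
    a - b ∈ topJacobson R :=
  mem_topJ.mpr fun I hIo hIc => I.sub_mem (mem_topJ.mp ha I hIo hIc) (mem_topJ.mp hb I hIo hIc)

theorem J_mul_right {a : R} (ha : a ∈ topJacobson R) (r : R) :
    a * r ∈ topJacobson R :=
  mem_topJ.mpr fun I hIo hIc => by
    simpa [op_smul_eq_mul] using I.smul_mem (op r) (mem_topJ.mp ha I hIo hIc)

end Basic

section ClosedJ

variable {R : Type u} [Ring R] [TopologicalSpace R] [IsTopologicalAddGroup R]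

theorem J_closed : IsClosed (topJacobson R) := by
  refine isClosed_biInter fun I hI => ?_
  have := AddSubgroup.isClosed_of_isOpen (G := R) I.toAddSubgroup (by simpa using hI.1)
  simpa using this

end ClosedJ

section Top

variable {R : Type u} [Ring R] [TopologicalSpace R] [IsTopologicalRing R]

/-- Left multiples of elements of the topological Jacobson radical stay in it. -/
theorem J_mul_left {a : R} (r : R) (ha : a ∈ topJacobson R) :
    r * a ∈ topJacobson R := by
  rw [mem_topJ] at ha ⊢
  intro M hMo hMc
  classical
  let N : Submodule Rᵐᵒᵖ R :=
    { carrier := {b | r * b ∈ M}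
      add_mem' := fun {b} {c} hb hc => by
        simp only [Set.mem_setOf_eq, mul_add] at *
        exact M.add_mem hb hc
      zero_mem' := by simp
      smul_mem' := fun c {b} hb => by
        simp only [Set.mem_setOf_eq] at *
        have h1 : r * (c • b) = c • (r * b) := by
          show r * (b * c.unop) = (r * b) * c.unop
          noncomm_ring
        rw [h1]
        exact M.smul_mem c hb }
  have hmemN : ∀ b : R, b ∈ N ↔ r * b ∈ M := fun b => Iff.rfl
  have hNo : IsOpen (N : Set R) := by
    have hcont : Continuous fun b : R => r * b := continuous_mul_left r
    have : (N : Set R) = (fun b : R => r * b) ⁻¹' (M : Set R) := rfl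
    rw [this]
    exact hMo.preimage hcont
  by_cases hN : (1:R) ∈ N
  · exact (hmemN a).mp (eq_top_of_one_mem N hN ▸ Submodule.mem_top)
  · -- N is an open coatom
    have hNc : IsCoatom N := by
      constructor
      · intro htop
        exact hN (htop ▸ Submodule.mem_top)
      · intro K hK
        -- pick k ∈ K, k ∉ N
        obtain ⟨k, hkK, hkN⟩ := SetLike.exists_of_lt hK
        have hrkM : r * k ∉ M := hkN
        -- M ⊔ span {r * k} = ⊤
        have hsup : M ⊔ Submodule.span Rᵐᵒᵖ {r * k} = ⊤ := by
          refine hMc.2 _ (lt_of_le_of_ne le_sup_left ?_)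
          intro heq
          exact hrkM (heq ▸ Submodule.mem_sup_right (Submodule.mem_span_singleton_self _))
        have h1 : (1:R) ∈ M ⊔ Submodule.span Rᵐᵒᵖ {r * k} := hsup ▸ Submodule.mem_top
        rw [Submodule.mem_sup] at h1
        obtain ⟨m, hm, s, hs, hms⟩ := h1
        rw [Submodule.mem_span_singleton] at hs
        obtain ⟨ct, hct⟩ := hs
        -- s = (r*k) * ct.unop
        have hs' : s = (r * k) * ct.unop := by rw [← hct]; rfl
        set t := ct.unop with htdef
        -- show K = ⊤ : any b belongs to K
        refine eq_top_iff.mpr fun b _ => ?_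
        have h2 : r * k * t = 1 - m := by
          rw [← hs', eq_sub_iff_add_eq, add_comm]; exact hms
        have hmem1 : b - k * (t * (r * b)) ∈ N := by
          rw [hmemN]
          have hcalc : r * (b - k * (t * (r * b))) = m * (r * b) := by
            have e1 : r * (b - k * (t * (r * b))) = r * b - (r * k * t) * (r * b) := by
              noncomm_ring
            rw [e1, h2]; noncomm_ring
          rw [hcalc]
          simpa [op_smul_eq_mul] using M.smul_mem (op (r * b)) hm
        have hmem2 : k * (t * (r * b)) ∈ K := by
          simpa [op_smul_eq_mul] using K.smul_mem (op (t * (r * b))) hkK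
        have hbsplit : b = (b - k * (t * (r * b))) + k * (t * (r * b)) := by abel
        rw [hbsplit]
        exact K.add_mem (hK.le hmem1) hmem2
    exact (hmemN a).mp (ha N hNo hNc)

theorem Jc_trans {a b c : R} (h1 : a - b ∈ topJacobson R) (h2 : b - c ∈ topJacobson R) :
    a - c ∈ topJacobson R := by
  have := J_add h1 h2
  rwa [sub_add_sub_cancel] at this

theorem Jc_symm {a b : R} (h : a - b ∈ topJacobson R) : b - a ∈ topJacobson R := by
  have := J_neg h; rwa [neg_sub] at this

theorem Jc_mul_left {a b : R} (r : R) (h : a - b ∈ topJacobson R) :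
    r * a - r * b ∈ topJacobson R := by
  have h1 : r * a - r * b = r * (a - b) := by noncomm_ring
  rw [h1]; exact J_mul_left r h

theorem Jc_mul_right {a b : R} (r : R) (h : a - b ∈ topJacobson R) :
    a * r - b * r ∈ topJacobson R := by
  have h1 : a * r - b * r = (a - b) * r := by noncomm_ring
  rw [h1]; exact J_mul_right h r

/-- extend a proper right ideal containing an open right ideal to an open coatom -/
theorem exists_open_coatom {I B : Submodule Rᵐᵒᵖ R} (hIo : IsOpen (I : Set R))
    (hIB : I ≤ B) (hB : (1:R) ∉ B) :
    ∃ M : Submodule Rᵐᵒᵖ R, IsOpen (M : Set R) ∧ IsCoatom M ∧ B ≤ M := by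
  obtain ⟨M, hBM, hMmax⟩ := zorn_le_nonempty₀ {C : Submodule Rᵐᵒᵖ R | (1:R) ∉ C}
    (fun c hcs hchain y hy => by
      refine ⟨sSup c, ?_, fun z hz => le_sSup hz⟩
      intro h1
      obtain ⟨S, hSc, hS1⟩ := (Submodule.mem_sSup_of_directed ⟨y, hy⟩ hchain.directedOn).mp h1
      exact hcs hSc hS1) B hB
  have hMne : M ≠ ⊤ := fun htop => hMmax.1 (htop ▸ Submodule.mem_top)
  have hMc : IsCoatom M := by
    refine ⟨hMne, fun K hK => ?_⟩
    by_contra hKne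
    have hK1 : (1:R) ∉ K := fun h => hKne (eq_top_of_one_mem K h)
    exact absurd (hMmax.2 hK1 hK.le) (not_le_of_gt hK)
  refine ⟨M, ?_, hMc, hBM⟩
  have : IsOpen (I.toAddSubgroup : Set R) := by simpa using hIo
  have := AddSubgroup.isOpen_mono (H₁ := I.toAddSubgroup) (H₂ := M.toAddSubgroup)
    (fun x hx => hBM (hIB hx)) this
  simpa using this

end Top

section Corner

variable {R : Type u} [Ring R] [TopologicalSpace R] [IsTopologicalRing R]

theorem corner_right_absorb {e x : R} (he : e * e = e) (h : e * x * e = x) : x * e = x := by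
  conv_lhs => rw [← h]
  rw [mul_assoc, he, h]

theorem corner_left_absorb {e x : R} (he : e * e = e) (h : e * x * e = x) : e * x = x := by
  conv_lhs => rw [← h]
  rw [← mul_assoc, ← mul_assoc, he, h]

theorem corner_idem_eq {e : R} (hu : IsLocalIdempotent e) {x : R}
    (hcx : e * x * e = x) (hx : x * x = x) : x = 0 ∨ x = e := by
  have hu1 : e * e = e := hu.1
  have hxu : x * e = x := corner_right_absorb hu1 hcx
  have hux : e * x = x := corner_left_absorb hu1 hcx
  rcases hu.2.2 x with ⟨y, h1, _⟩ | ⟨y, h1, _⟩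
  · right
    rw [hcx] at h1
    calc x = x * e := hxu.symm
      _ = x * (x * (e * y * e)) := by rw [h1]
      _ = (x * x) * (e * y * e) := (mul_assoc x x (e * y * e)).symm
      _ = x * (e * y * e) := by rw [hx]
      _ = e := h1
  · left
    rw [hcx] at h1
    have hid : (e - x) * (e - x) = e - x := by
      have h2 : (e - x) * (e - x) = e*e - e*x - x*e + x*x := by noncomm_ring
      rw [h2, hu1, hux, hxu, hx]
      noncomm_ring
    have hplus : (e - x) * e = e - x := by
      rw [sub_mul, hu1, hxu]
    have h3 : e - x = e := by
      calc e - x = (e - x) * e := hplus.symm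
        _ = (e - x) * ((e - x) * (e * y * e)) := by rw [h1]
        _ = ((e - x) * (e - x)) * (e * y * e) := (mul_assoc (e - x) (e - x) (e * y * e)).symm
        _ = (e - x) * (e * y * e) := by rw [hid]
        _ = e := h1
    exact sub_eq_self.mp h3

theorem corner_right_inv {e : R} (hu : IsLocalIdempotent e) {j m : R}
    (hj : e * j * e = j) (hm : e * m * e = m) (h : j * m = e) : m * j = e := by
  have hu1 : e * e = e := hu.1
  have hje : j * e = j := corner_right_absorb hu1 hj
  have hem : e * m = m := corner_left_absorb hu1 hm
  have hme : m * e = m := corner_right_absorb hu1 hm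
  have hcmj : e * (m * j) * e = m * j := by
    calc e * (m * j) * e = (e * m) * (j * e) := by noncomm_ring
      _ = m * j := by rw [hem, hje]
  have hmjidem : (m * j) * (m * j) = m * j := by
    calc (m * j) * (m * j) = m * (j * m) * j := by noncomm_ring
      _ = m * e * j := by rw [h]
      _ = m * j := by rw [hme]
  rcases corner_idem_eq hu hcmj hmjidem with h0 | h1
  · exfalso
    apply hu.2.1
    calc e = e * e := hu1.symm
      _ = (j * m) * (j * m) := by rw [h]
      _ = j * (m * j) * m := by noncomm_ring
      _ = 0 := by rw [h0]; noncomm_ring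
  · exact h1

/-- a corner element not in the topological Jacobson radical is invertible
in the corner ring. -/
theorem corner_inv_of_not_mem_topJ {e : R} (hu : IsLocalIdempotent e) {d : R}
    (hd : e * d * e = d) (hdJ : d ∉ topJacobson R) :
    ∃ d', e * d' * e = d' ∧ d * d' = e ∧ d' * d = e := by
  have hu1 : e * e = e := hu.1
  have hde : d * e = d := corner_right_absorb hu1 hd
  have hed : e * d = d := corner_left_absorb hu1 hd
  by_contra hni
  push_neg at hni
  have hnoright : ∀ m, e * m * e = m → d * m ≠ e := by
    intro m hm hdm
    exact hni m hm hdm (corner_right_inv hu hd hm hdm)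
  apply hdJ
  rw [mem_topJ]
  intro M hMo hMc
  by_contra hdM
  have hsup : M ⊔ Submodule.span Rᵐᵒᵖ {d} = ⊤ := by
    refine hMc.2 _ (lt_of_le_of_ne le_sup_left ?_)
    intro heq
    exact hdM (heq ▸ Submodule.mem_sup_right (Submodule.mem_span_singleton_self _))
  have h1 : (1:R) ∈ M ⊔ Submodule.span Rᵐᵒᵖ {d} := hsup ▸ Submodule.mem_top
  rw [Submodule.mem_sup] at h1
  obtain ⟨m, hm, s, hs, hms⟩ := h1
  rw [Submodule.mem_span_singleton] at hs
  obtain ⟨ct, hct⟩ := hs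
  have hs' : s = d * ct.unop := by rw [← hct]; rfl
  set r₀ := ct.unop with hr₀
  set c'' := e * r₀ * e with hc''
  have hmu : e - d * c'' ∈ M := by
    have h2 : e - d * c'' = m * e := by
      have h3 : (1:R) = m + d * r₀ := by rw [← hms, hs']
      calc e - d * c'' = e - d * (e * r₀ * e) := by rw [hc'']
        _ = e - (d * e) * r₀ * e := by noncomm_ring
        _ = e - d * r₀ * e := by rw [hde]
        _ = (1 - d * r₀) * e := by noncomm_ring
        _ = ((m + d * r₀) - d * r₀) * e := by rw [← h3]
        _ = m * e := by noncomm_ring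
    rw [h2]
    simpa [op_smul_eq_mul] using M.smul_mem (op e) hm
  have hcdc : e * (d * c'') * e = d * c'' := by
    calc e * (d * c'') * e = (e * d) * (e * r₀ * (e * e)) := by rw [hc'']; noncomm_ring
      _ = (e * d) * (e * r₀ * e) := by rw [hu1]
      _ = d * c'' := by rw [hed, hc'']
  have hno2 : ∀ k, e * k * e = k → (d * c'') * k ≠ e := by
    intro k hk h
    have hke : k * e = k := corner_right_absorb hu1 hk
    have hec'' : e * c'' = c'' := by
      rw [hc'', ← mul_assoc, ← mul_assoc, hu1]
    have hck : e * (c'' * k) * e = c'' * k := by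
      calc e * (c'' * k) * e = (e * c'') * (k * e) := by noncomm_ring
        _ = c'' * k := by rw [hke, hec'']
    exact hnoright (c'' * k) hck (by rw [← mul_assoc]; exact h)
  rcases hu.2.2 (d * c'') with ⟨y, h1', _⟩ | ⟨y, h1', _⟩
  · rw [hcdc] at h1'
    have hyc : e * (e * y * e) * e = e * y * e := by
      calc e * (e * y * e) * e = (e*e) * y * (e*e) := by noncomm_ring
        _ = e * y * e := by rw [hu1]
    exact hno2 (e * y * e) hyc h1'
  · rw [hcdc] at h1'
    have heM : e ∈ M := by
      have h4 : e = op (e * y * e) • (e - d * c'') := by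
        rw [op_smul_eq_mul]; exact h1'.symm
      rw [h4]
      exact M.smul_mem _ hmu
    apply hdM
    have h5 : d = op (d * e) • e := by
      rw [op_smul_eq_mul, ← mul_assoc, hed, hde]
    rw [h5]
    exact M.smul_mem _ heM

/-- row generation: a nonzero (mod J) element of a local-idempotent row
generates the idempotent modulo J. -/
theorem row_gen {e : R} (hu : IsLocalIdempotent e) {a : R}
    (hrow : a - e * a ∈ topJacobson R) (haJ : a ∉ topJacobson R) :
    ∃ c : R, a * c - e ∈ topJacobson R := by
  have hu1 : e * e = e := hu.1
  have hi : ∃ c₁, a * c₁ * e ∉ topJacobson R := by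
    by_contra hno
    push_neg at hno
    apply haJ
    rw [mem_topJ]
    intro M hMo hMc
    by_contra haM
    have hsup : M ⊔ Submodule.span Rᵐᵒᵖ {a} = ⊤ := by
      refine hMc.2 _ (lt_of_le_of_ne le_sup_left ?_)
      intro heq
      exact haM (heq ▸ Submodule.mem_sup_right (Submodule.mem_span_singleton_self _))
    have h1 : (1:R) ∈ M ⊔ Submodule.span Rᵐᵒᵖ {a} := hsup ▸ Submodule.mem_top
    rw [Submodule.mem_sup] at h1
    obtain ⟨m, hm, s, hs, hms⟩ := h1
    rw [Submodule.mem_span_singleton] at hs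
    obtain ⟨ct, hct⟩ := hs
    have hs' : s = a * ct.unop := by rw [← hct]; rfl
    set t₀ := ct.unop with ht₀
    have heM : e ∈ M := by
      have h4 : e = m * e + a * t₀ * e := by
        have h3 : (1:R) = m + a * t₀ := by rw [← hms, hs']
        calc e = 1 * e := (one_mul e).symm
          _ = (m + a * t₀) * e := by rw [← h3]
          _ = m * e + a * t₀ * e := by noncomm_ring
      rw [h4]
      refine M.add_mem ?_ ?_
      · simpa [op_smul_eq_mul] using M.smul_mem (op e) hm
      · exact mem_topJ.mp (hno t₀) M hMo hMc
    apply haM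
    have h5 : a = op a • e + (a - e * a) := by
      rw [op_smul_eq_mul]; abel
    rw [h5]
    exact M.add_mem (M.smul_mem _ heM) (mem_topJ.mp hrow M hMo hMc)
  obtain ⟨c₁, hc₁⟩ := hi
  set d := e * (a * c₁ * e) with hddef
  have hcd : e * d * e = d := by
    rw [hddef]
    calc e * (e * (a * c₁ * e)) * e = (e*e) * (a * c₁ * (e*e)) := by noncomm_ring
      _ = e * (a * c₁ * e) := by rw [hu1]
  have hdiff : a * c₁ * e - d ∈ topJacobson R := by
    have h6 : a * c₁ * e - d = (a - e*a) * (c₁ * e) := by rw [hddef]; noncomm_ring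
    rw [h6]
    exact J_mul_right hrow _
  have hdJ : d ∉ topJacobson R := by
    intro h
    apply hc₁
    have h7 := J_add hdiff h
    simpa using h7
  obtain ⟨d', hd'c, hdd', _⟩ := corner_inv_of_not_mem_topJ hu hcd hdJ
  refine ⟨c₁ * (e * d'), ?_⟩
  have h7 : a * (c₁ * (e * d')) - e = (a * c₁ * e - d) * d' + (d * d' - e) := by
    have h8 : a * (c₁ * (e * d')) = (a * c₁ * e) * d' := by noncomm_ring
    rw [h8]; noncomm_ring
  rw [h7, hdd', sub_self, add_zero]
  exact J_mul_right hdiff d'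

end Corner

section Unif

variable {R : Type u} [Ring R] [UniformSpace R] [IsUniformAddGroup R] [IsTopologicalRing R]
  [T2Space R] [CompleteSpace R]

theorem exists_ideal_mul_sub (hRL : IsRightLinearTopology R) (r : R)
    (I : Submodule Rᵐᵒᵖ R) (hIo : IsOpen (I : Set R)) :
    ∃ I₂ : Submodule Rᵐᵒᵖ R, IsOpen (I₂ : Set R) ∧ ∀ i ∈ I₂, r * i ∈ I := by
  have hcont : Continuous fun b : R => r * b := continuous_mul_left r
  have hmem : (fun b : R => r * b) ⁻¹' (I : Set R) ∈ nhds (0:R) := by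
    apply hcont.continuousAt.preimage_mem_nhds
    simpa using hIo.mem_nhds I.zero_mem
  obtain ⟨I₂, hI₂o, hI₂s⟩ := hRL _ hmem
  exact ⟨I₂, hI₂o, fun i hi => hI₂s hi⟩

theorem exists_ideal_avoid (hRL : IsRightLinearTopology R) {x : R} {C : Set R}
    (hC : IsClosed C) (hx : x ∉ C) :
    ∃ I : Submodule Rᵐᵒᵖ R, IsOpen (I : Set R) ∧ ∀ i ∈ I, x + i ∉ C := by
  have h1 : Cᶜ ∈ nhds x := hC.isOpen_compl.mem_nhds hx
  have hcont : Continuous fun y : R => x + y := continuous_add_left x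
  have hmem : (fun y : R => x + y) ⁻¹' Cᶜ ∈ nhds (0:R) := by
    apply hcont.continuousAt.preimage_mem_nhds
    simpa using h1
  obtain ⟨I, hIo, hIs⟩ := hRL _ hmem
  exact ⟨I, hIo, fun i hi => hIs hi⟩

theorem summable_of_tendsto_cofinite (hRL : IsRightLinearTopology R) {β : Type*}
    {g : β → R} (hg : Tendsto g cofinite (nhds 0)) : Summable g := by
  classical
  rw [summable_iff_cauchySeq_finset, cauchySeq_finset_iff_sum_vanishing]
  intro e he
  obtain ⟨I, hIo, hIe⟩ := hRL e he
  have hfin : {b | g b ∉ (I : Set R)}.Finite := by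
    have h1 := Filter.tendsto_def.mp hg _ (hIo.mem_nhds I.zero_mem)
    rw [Filter.mem_cofinite] at h1
    exact h1
  refine ⟨hfin.toFinset, fun t ht => hIe ?_⟩
  refine Submodule.sum_mem I fun b hb => ?_
  by_contra hbI
  exact (Finset.disjoint_left.mp ht hb) (hfin.mem_toFinset.mpr hbI)

theorem hasSum_mem_submodule {β : Type*} {g : β → R} {x : R} (h : HasSum g x)
    (I : Submodule Rᵐᵒᵖ R) (hIc : IsClosed (I : Set R)) (hm : ∀ b, g b ∈ I) : x ∈ I :=
  hIc.mem_of_tendsto h (Filter.Eventually.of_forall fun s => Submodule.sum_mem I fun b _ => hm b)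

theorem hasSum_mem_J {β : Type*} {g : β → R} {x : R} (h : HasSum g x)
    (hm : ∀ b, g b ∈ topJacobson R) : x ∈ topJacobson R := by
  classical
  refine (J_closed (R := R)).mem_of_tendsto h (Filter.Eventually.of_forall fun s => ?_)
  have h2 : (∑ b ∈ s, g b) ∈ topJacobsonAddSubgroup R :=
    AddSubgroup.sum_mem _ fun b _ => topJAdd_mem.mpr (hm b)
  exact topJAdd_mem.mp h2

/-- A local idempotent is not in the topological Jacobson radical. -/
theorem local_not_mem_topJ (hRL : IsRightLinearTopology R) {e : R}
    (hu : IsLocalIdempotent e) : e ∉ topJacobson R := by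
  have hu1 : e * e = e := hu.1
  have h0 : ∃ I₀ : Submodule Rᵐᵒᵖ R, IsOpen (I₀ : Set R) ∧ e ∉ I₀ := by
    have hne : (0:R) ∈ ({e}ᶜ : Set R) := by
      simp only [Set.mem_compl_iff, Set.mem_singleton_iff]
      exact fun h => hu.2.1 h.symm
    have hmem : ({e}ᶜ : Set R) ∈ nhds (0:R) := isOpen_compl_singleton.mem_nhds hne
    obtain ⟨I₀, h1, h2⟩ := hRL _ hmem
    exact ⟨I₀, h1, fun hm => (h2 hm) rfl⟩
  obtain ⟨I₀, hI₀o, hI₀u⟩ := h0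
  obtain ⟨I', hI'o, hI'mul⟩ := exists_ideal_mul_sub hRL e I₀ hI₀o
  have hB : (1:R) ∉ Submodule.span Rᵐᵒᵖ {1 - e} ⊔ I' := by
    intro h
    rw [Submodule.mem_sup] at h
    obtain ⟨s, hs, i, hi, hsi⟩ := h
    rw [Submodule.mem_span_singleton] at hs
    obtain ⟨ct, hct⟩ := hs
    have hs' : s = (1 - e) * ct.unop := by rw [← hct]; rfl
    have h1 : e = e * ((1-e) * ct.unop) + e * i := by
      have h2 : (1:R) = (1-e) * ct.unop + i := by rw [← hs']; exact hsi.symm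
      calc e = e * 1 := by rw [mul_one]
        _ = e * ((1-e) * ct.unop + i) := by rw [← h2]
        _ = e * ((1-e) * ct.unop) + e * i := by rw [mul_add]
    have h2 : e * ((1-e) * ct.unop) = 0 := by
      have h3 : e * (1 - e) = 0 := by rw [mul_sub, mul_one, hu1, sub_self]
      rw [← mul_assoc, h3, zero_mul]
    have h4 : e = e * i := by rw [h2, zero_add] at h1; exact h1
    exact hI₀u (h4 ▸ hI'mul i hi)
  obtain ⟨M, hMo, hMc, hBM⟩ := exists_open_coatom hI'o le_sup_right hB
  intro heJ
  have h1u : (1:R) - e ∈ M :=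
    hBM (Submodule.mem_sup_left (Submodule.mem_span_singleton_self _))
  have hUM : e ∈ M := mem_topJ.mp heJ M hMo hMc
  have hone : (1:R) ∈ M := by
    have h5 := M.add_mem h1u hUM
    simpa using h5
  exact hMc.1 (eq_top_of_one_mem M hone)

end Unif

section Main

variable {R : Type u} [Ring R] [UniformSpace R] [IsUniformAddGroup R] [IsTopologicalRing R]
  [T2Space R] [CompleteSpace R]

theorem per_z (hRL : IsRightLinearTopology R)
    {W : Type u} {u : W → R} (hu0 : Tendsto u cofinite (nhds 0))
    (huloc : ∀ w, IsLocalIdempotent (u w))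
    (huorth : ∀ v w, v ≠ w → u v * u w = 0) (huSum : HasSum u 1)
    {a : R} (haI : a * a - a ∈ topJacobson R) (haJ : a ∉ topJacobson R)
    (hpa : ∀ p q : R, p * p - p ∈ topJacobson R → q * q - q ∈ topJacobson R →
      p * q ∈ topJacobson R → q * p ∈ topJacobson R → a - (p + q) ∈ topJacobson R →
      p ∈ topJacobson R ∨ q ∈ topJacobson R) :
    ∃ e : R, IsLocalIdempotent e ∧ e - a ∈ topJacobson R ∧
      ∀ v, u v * a ∈ topJacobson R → u v * e = 0 := by
  classical
  -- step 1: find a coordinate where a is nonzero mod J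
  have hex : ∃ w, u w * a ∉ topJacobson R := by
    by_contra hno
    push_neg at hno
    apply haJ
    have hsum : HasSum (fun v => u v * a) a := by
      simpa using huSum.mul_right a
    exact hasSum_mem_J hsum hno
  obtain ⟨w, hw⟩ := hex
  have hu1 : u w * u w = u w := (huloc w).1
  -- step 2: row generation
  have hrow0 : u w * a - u w * (u w * a) ∈ topJacobson R := by
    have h0 : u w * a - u w * (u w * a) = 0 := by rw [← mul_assoc, hu1, sub_self]
    rw [h0]; exact J_zero
  obtain ⟨c, hBc⟩ := row_gen (huloc w) hrow0 hw
  -- hBc : u w * a * c - u w ∈ J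
  set y : R := u w * a with hy
  set x₀ : R := a * (c * u w) with hx₀
  have huy : u w * y = y := by rw [hy, ← mul_assoc, hu1]
  have hx₀u : x₀ * u w = x₀ := by rw [hx₀, mul_assoc, mul_assoc, hu1]
  -- reshape hBc
  have hs2 : y * (c * u w) - u w ∈ topJacobson R := by
    have i2 : y * (c * u w) = (y * c) * u w := by noncomm_ring
    have s3 : (y * c) * u w - u w * u w ∈ topJacobson R := Jc_mul_right (u w) hBc
    rw [hu1] at s3
    rw [i2]; exact s3
  -- F1 : y * x₀ - u w ∈ J
  have F1 : y * x₀ - u w ∈ topJacobson R := by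
    have i1 : y * x₀ = (u w * (a * a)) * (c * u w) := by rw [hx₀, hy]; noncomm_ring
    have s1 : (u w * (a * a)) * (c * u w) - (u w * a) * (c * u w) ∈ topJacobson R :=
      Jc_mul_right (c * u w) (Jc_mul_left (u w) haI)
    rw [← hy] at s1
    have F1' := Jc_trans s1 hs2
    rw [← i1] at F1'
    exact F1'
  -- ε
  set ε : R := x₀ * y with hε
  have hεrow : u w * ε - y ∈ topJacobson R := by
    have i1 : u w * ε = (y * (c * u w)) * y := by rw [hε, hx₀, hy]; noncomm_ring
    have s1 : (y * (c * u w)) * y - u w * y ∈ topJacobson R := Jc_mul_right y hs2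
    rw [huy] at s1
    rw [← i1] at s1
    exact s1
  have hεJ : ε ∉ topJacobson R := by
    intro h
    apply hw
    have h1 : u w * ε ∈ topJacobson R := J_mul_left _ h
    have h2 : y = u w * ε - (u w * ε - y) := by abel
    show y ∈ topJacobson R
    rw [h2]
    exact J_sub h1 hεrow
  have g1 : ε * a - ε ∈ topJacobson R := by
    have i1 : ε * a = x₀ * (u w * (a * a)) := by rw [hε, hy]; noncomm_ring
    have s1 : x₀ * (u w * (a * a)) - x₀ * (u w * a) ∈ topJacobson R :=
      Jc_mul_left x₀ (Jc_mul_left (u w) haI)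
    rw [← hy, ← hε] at s1
    rw [← i1] at s1
    exact s1
  have g2 : a * ε - ε ∈ topJacobson R := by
    have i1 : a * ε = ((a * a) * (c * u w)) * y := by rw [hε, hx₀]; noncomm_ring
    have s1 : ((a * a) * (c * u w)) * y - (a * (c * u w)) * y ∈ topJacobson R :=
      Jc_mul_right y (Jc_mul_right (c * u w) haI)
    have i2 : (a * (c * u w)) * y = ε := by rw [hε, hx₀]
    rw [i2] at s1
    rw [← i1] at s1
    exact s1
  have g3 : ε * ε - ε ∈ topJacobson R := by
    have i1 : ε * ε = x₀ * ((y * x₀) * y) := by rw [hε]; noncomm_ring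
    have s1 : x₀ * ((y * x₀) * y) - x₀ * (u w * y) ∈ topJacobson R :=
      Jc_mul_left x₀ (Jc_mul_right y F1)
    have i2 : x₀ * (u w * y) = ε := by rw [huy, hε]
    rw [i2] at s1
    rw [← i1] at s1
    exact s1
  -- primitivity
  have hb2 : (a - ε) * (a - ε) - (a - ε) ∈ topJacobson R := by
    have iden : (a - ε) * (a - ε) - (a - ε) =
        (a * a - a) - (a * ε - ε) - (ε * a - ε) + (ε * ε - ε) := by noncomm_ring
    rw [iden]
    exact J_add (J_sub (J_sub haI g2) g1) g3
  have hb3 : ε * (a - ε) ∈ topJacobson R := by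
    have iden : ε * (a - ε) = (ε * a - ε) - (ε * ε - ε) := by noncomm_ring
    rw [iden]; exact J_sub g1 g3
  have hb4 : (a - ε) * ε ∈ topJacobson R := by
    have iden : (a - ε) * ε = (a * ε - ε) - (ε * ε - ε) := by noncomm_ring
    rw [iden]; exact J_sub g2 g3
  have hb5 : a - (ε + (a - ε)) ∈ topJacobson R := by
    have iden : a - (ε + (a - ε)) = 0 := by abel
    rw [iden]; exact J_zero
  have hεa : a - ε ∈ topJacobson R := by
    rcases hpa ε (a - ε) g3 hb2 hb3 hb4 hb5 with h | h
    · exact absurd h hεJ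
    · exact h
  -- x : the row-supported correction of x₀
  set g : W → R := fun v => if u v * a ∈ topJacobson R then 0 else u v * x₀ with hg
  have hgt : Tendsto g cofinite (nhds 0) := by
    have h1 : Tendsto (fun v => u v * x₀) cofinite (nhds 0) := by
      have h2 := ((continuous_mul_right x₀).tendsto 0).comp hu0
      simpa [Function.comp_def] using h2
    rw [Filter.tendsto_def]
    intro s hs
    have h3 := Filter.tendsto_def.mp h1 s hs
    refine Filter.mem_of_superset h3 fun v hv => ?_
    simp only [Set.mem_preimage] at hv ⊢
    by_cases hva : u v * a ∈ topJacobson R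
    · simpa [hg, hva] using mem_of_mem_nhds hs
    · simpa [hg, hva] using hv
  obtain ⟨x, hxsum⟩ := summable_of_tendsto_cofinite hRL hgt
  have hx₀sum : HasSum (fun v => u v * x₀) x₀ := by simpa using huSum.mul_right x₀
  have hxx₀ : x₀ - x ∈ topJacobson R := by
    have hdiff : HasSum (fun v => u v * x₀ - g v) (x₀ - x) := hx₀sum.sub hxsum
    refine hasSum_mem_J hdiff fun v => ?_
    by_cases hva : u v * a ∈ topJacobson R
    · simp only [hg, if_pos hva, sub_zero]
      have iden : u v * x₀ = (u v * a) * (c * u w) := by rw [hx₀]; noncomm_ring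
      rw [iden]
      exact J_mul_right hva _
    · simp only [hg, if_neg hva, sub_self]
      exact J_zero
  have hrowx : ∀ v, u v * a ∈ topJacobson R → u v * x = 0 := by
    intro v₀ hv₀
    have hmap : HasSum (fun v => u v₀ * g v) (u v₀ * x) := by
      have h5 := hxsum.map (AddMonoidHom.mulLeft (u v₀)) (continuous_mul_left (u v₀))
      simpa [Function.comp_def, AddMonoidHom.coe_mulLeft] using h5
    have hzero : (fun v => u v₀ * g v) = fun _ => (0:R) := by
      funext v
      by_cases hva : u v * a ∈ topJacobson R
      · simp [hg, if_pos hva]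
      · have hne : v₀ ≠ v := fun h => hva (h ▸ hv₀)
        simp only [hg, if_neg hva]
        rw [← mul_assoc, huorth v₀ v hne, zero_mul]
    rw [hzero] at hmap
    exact hmap.unique hasSum_zero
  have hxu : x * u w = x := by
    have hmap : HasSum (fun v => g v * u w) (x * u w) := by
      have h5 := hxsum.map (AddMonoidHom.mulRight (u w)) (continuous_mul_right (u w))
      simpa [Function.comp_def, AddMonoidHom.coe_mulRight] using h5
    have heq : (fun v => g v * u w) = g := by
      funext v
      by_cases hva : u v * a ∈ topJacobson R
      · simp [hg, if_pos hva]
      · simp only [hg, if_neg hva]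
        rw [mul_assoc, hx₀u]
    rw [heq] at hmap
    exact hmap.unique hxsum
  -- t and its corner inverse
  set t : R := y * x with ht
  have hut : u w * t = t := by rw [ht, ← mul_assoc, huy]
  have htu : t * u w = t := by rw [ht, mul_assoc, hxu]
  have hct : u w * t * u w = t := by rw [hut, htu]
  have htuw : t - u w ∈ topJacobson R := by
    have s1 : t - y * x₀ ∈ topJacobson R := by
      rw [ht]
      have s2 : y * x - y * x₀ ∈ topJacobson R := Jc_mul_left y (Jc_symm hxx₀)
      exact s2
    exact Jc_trans s1 F1
  have htJ : t ∉ topJacobson R := by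
    intro h
    apply local_not_mem_topJ hRL (huloc w)
    have h5 : u w = t - (t - u w) := by abel
    rw [h5]
    exact J_sub h htuw
  obtain ⟨t', ht'c, htt', ht't⟩ := corner_inv_of_not_mem_topJ (huloc w) hct htJ
  have ht'u : t' * u w = t' := corner_right_absorb hu1 ht'c
  have hut' : u w * t' = t' := corner_left_absorb hu1 ht'c
  have ht'uw : t' - u w ∈ topJacobson R := by
    have s1 : t' * t - t' * u w ∈ topJacobson R := Jc_mul_left t' htuw
    rw [ht't, ht'u] at s1
    exact Jc_symm s1
  -- e
  set α : R := x * t' with hα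
  set e : R := α * y with he
  have hyα : y * α = u w := by rw [hα, ← mul_assoc, ← ht, htt']
  have hαu : α * u w = α := by rw [hα, mul_assoc, ht'u]
  have heidem : e * e = e := by
    rw [he]
    calc (α * y) * (α * y) = α * ((y * α) * y) := by noncomm_ring
      _ = α * (u w * y) := by rw [hyα]
      _ = α * y := by rw [huy]
  have hea : e - a ∈ topJacobson R := by
    have s1 : e - (x₀ * t') * y ∈ topJacobson R := by
      rw [he, hα]
      exact Jc_mul_right y (Jc_mul_right t' (Jc_symm hxx₀))
    have s2 : (x₀ * t') * y - (x₀ * u w) * y ∈ topJacobson R :=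
      Jc_mul_right y (Jc_mul_left x₀ ht'uw)
    have i1 : (x₀ * u w) * y = ε := by rw [hx₀u, hε]
    rw [i1] at s2
    exact Jc_trans (Jc_trans s1 s2) (Jc_symm hεa)
  have herow : ∀ v, u v * a ∈ topJacobson R → u v * e = 0 := by
    intro v hv
    rw [he, hα]
    calc u v * ((x * t') * y) = ((u v * x) * t') * y := by noncomm_ring
      _ = ((0:R) * t') * y := by rw [hrowx v hv]
      _ = 0 := by rw [zero_mul, zero_mul]
  have hene : e ≠ 0 := by
    intro h
    apply haJ
    have h2 : a = -(e - a) := by rw [h]; abel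
    rw [h2]
    exact J_neg hea
  refine ⟨e, ⟨heidem, hene, ?_⟩, hea, herow⟩
  intro r
  set m : R := (y * r) * α with hm
  have hm1 : u w * m = m := by
    rw [hm]
    calc u w * (y * r * α) = (u w * (y * r)) * α := (mul_assoc (u w) (y * r) α).symm
      _ = ((u w * y) * r) * α := by rw [← mul_assoc (u w) y r]
      _ = y * r * α := by rw [huy]
  have hm2 : m * u w = m := by
    rw [hm]
    calc (y * r * α) * u w = (y * r) * (α * u w) := mul_assoc (y * r) α (u w)
      _ = y * r * α := by rw [hαu]
  have hmc : u w * m * u w = m := by rw [hm1, hm2]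
  have hψmul : ∀ p q : R, (α * (p * y)) * (α * (q * y)) = α * ((p * (u w * q)) * y) := by
    intro p q
    have iden : (α * (p * y)) * (α * (q * y)) = α * ((p * ((y * α) * q)) * y) := by noncomm_ring
    rw [iden, hyα]
  have hψu : α * (u w * y) = e := by rw [huy, he]
  have hEre : e * r * e = α * (m * y) := by
    rw [he, hm]
    noncomm_ring
  have hEye : ∀ y₀ : R, e * (α * (y₀ * y)) * e = α * ((u w * (y₀ * u w)) * y) := by
    intro y₀
    have iden : e * (α * (y₀ * y)) * e = α * (((y * α) * (y₀ * (y * α))) * y) := by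
      rw [he]; noncomm_ring
    rw [iden, hyα]
  have huu : ∀ X : R, u w * (u w * X) = u w * X := by
    intro X; rw [← mul_assoc, hu1]
  have hsub : e - e * r * e = α * ((u w - m) * y) := by
    rw [hEre]
    conv_lhs => rw [← hψu]
    noncomm_ring
  rcases (huloc w).2.2 m with ⟨y₀, h1, h2⟩ | ⟨y₀, h1, h2⟩
  · rw [hmc] at h1 h2
    refine Or.inl ⟨α * (y₀ * y), ?_, ?_⟩
    · rw [hEre, hEye y₀, hψmul, huu (y₀ * u w)]
      have hk : u w * (y₀ * u w) = u w * y₀ * u w := by rw [← mul_assoc]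
      rw [hk, h1, hψu]
    · rw [hEre, hEye y₀, hψmul, hm1]
      have hk : u w * (y₀ * u w) = u w * y₀ * u w := by rw [← mul_assoc]
      rw [hk, h2, hψu]
  · rw [hmc] at h1 h2
    refine Or.inr ⟨α * (y₀ * y), ?_, ?_⟩
    · rw [hsub, hEye y₀, hψmul, huu (y₀ * u w)]
      have hk : u w * (y₀ * u w) = u w * y₀ * u w := by rw [← mul_assoc]
      rw [hk, h1, hψu]
    · rw [hEye y₀, hsub, hψmul]
      have hum : u w * (u w - m) = u w - m := by rw [mul_sub, hu1, hm1]
      rw [hum]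
      have hk : u w * (y₀ * u w) = u w * y₀ * u w := by rw [← mul_assoc]
      rw [hk, h2, hψu]

end Main

end LiftAux

theorem lift_zero_convergent_primitive_idempotents
    (R : Type u) [Ring R] [UniformSpace R] [IsUniformAddGroup R] [IsTopologicalRing R]
    [T2Space R] [CompleteSpace R] (hRL : IsRightLinearTopology R)
    (hSP : IsTopSemiperfect R)
    (Z : Type u) (f : Z → R)
    -- the residues of the `f z` modulo the topological Jacobson radical form a zero-convergent
    -- family in the quotient topology of `R/𝔥`
    (hconv : Filter.Tendsto (fun z => (QuotientAddGroup.mk (f z) : R ⧸ topJacobsonAddSubgroup R))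
      Filter.cofinite (nhds 0))
    -- the residue of each `f z` is an idempotent of `R/𝔥`
    (hidem : ∀ z, f z * f z - f z ∈ topJacobson R)
    -- the residue of each `f z` is nonzero
    (hne : ∀ z, f z ∉ topJacobson R)
    -- the residue of each `f z` is a primitive idempotent of `R/𝔥`
    (hprim : ∀ z, ∀ a b : R, a * a - a ∈ topJacobson R → b * b - b ∈ topJacobson R →
      a * b ∈ topJacobson R → b * a ∈ topJacobson R → f z - (a + b) ∈ topJacobson R →
      a ∈ topJacobson R ∨ b ∈ topJacobson R) :
    ∃ e : Z → R, Filter.Tendsto e Filter.cofinite (nhds 0) ∧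
      (∀ z, IsLocalIdempotent (e z)) ∧
      ∀ z, e z - f z ∈ topJacobson R := by
  classical
  obtain ⟨W, u, hu0, huloc, huorth, huSum⟩ := hSP
  -- choose the liftings
  have hμ : ∀ z : Z, ∃ e : R, IsLocalIdempotent e ∧ e - f z ∈ topJacobson R ∧
      ∀ v, u v * f z ∈ topJacobson R → u v * e = 0 := fun z =>
    LiftAux.per_z hRL hu0 huloc huorth huSum (hidem z) (hne z) (hprim z)
  choose E hE1 hE2 hE3 using hμ
  -- finiteness of each row of the family
  have hfinRow : ∀ v : W, {z : Z | u v * f z ∉ topJacobson R}.Finite := by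
    intro v
    have hvJ : u v ∉ topJacobson R := LiftAux.local_not_mem_topJ hRL (huloc v)
    obtain ⟨Iv, hIvo, hIvq⟩ := LiftAux.exists_ideal_avoid hRL (LiftAux.J_closed (R := R)) hvJ
    obtain ⟨I₂, hI₂o, hI₂m⟩ := LiftAux.exists_ideal_mul_sub hRL (u v) Iv hIvo
    have himg : IsOpen (QuotientAddGroup.mk '' (I₂ : Set R) :
        Set (R ⧸ topJacobsonAddSubgroup R)) := QuotientAddGroup.isOpenMap_coe _ hI₂o
    have h0img : (0 : R ⧸ topJacobsonAddSubgroup R) ∈ QuotientAddGroup.mk '' (I₂ : Set R) :=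
      ⟨0, I₂.zero_mem, rfl⟩
    have hev := Filter.tendsto_def.mp hconv _ (himg.mem_nhds h0img)
    rw [Filter.mem_cofinite] at hev
    refine hev.subset fun z hz => ?_
    simp only [Set.mem_compl_iff, Set.mem_preimage]
    intro hmem
    obtain ⟨i, hi, heq⟩ := hmem
    have hfzi : f z - i ∈ topJacobson R := by
      have h3 := (QuotientAddGroup.eq (s := topJacobsonAddSubgroup R)).mp heq
      rw [neg_add_eq_sub] at h3
      exact LiftAux.topJAdd_mem.mp h3
    have hz' : u v * f z ∉ topJacobson R := hz
    have hu1v : u v * u v = u v := (huloc v).1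
    have hrow0 : u v * f z - u v * (u v * f z) ∈ topJacobson R := by
      have h0 : u v * f z - u v * (u v * f z) = 0 := by rw [← mul_assoc, hu1v, sub_self]
      rw [h0]; exact LiftAux.J_zero
    obtain ⟨cc, hcc⟩ := LiftAux.row_gen (huloc v) hrow0 hz'
    have hm2 : (u v * i) * cc ∈ Iv := by
      simpa [op_smul_eq_mul] using Iv.smul_mem (op cc) (hI₂m i hi)
    have h4 : u v + -((u v * i) * cc) =
        -((u v * f z) * cc - u v) + (u v * (f z - i)) * cc := by noncomm_ring
    have hmem4 : u v + -((u v * i) * cc) ∈ topJacobson R := by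
      rw [h4]
      exact LiftAux.J_add (LiftAux.J_neg hcc)
        (LiftAux.J_mul_right (LiftAux.J_mul_left (u v) hfzi) cc)
    exact hIvq (-((u v * i) * cc)) (Iv.neg_mem hm2) hmem4
  -- assemble
  refine ⟨E, ?_, hE1, hE2⟩
  rw [Filter.tendsto_def]
  intro s hs
  obtain ⟨I, hIo, hIs⟩ := hRL s hs
  rw [Filter.mem_cofinite]
  have hG : {v : W | u v ∉ (I : Set R)}.Finite := by
    have h1 := Filter.tendsto_def.mp hu0 _ (hIo.mem_nhds I.zero_mem)
    rw [Filter.mem_cofinite] at h1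
    exact h1
  have hIc : IsClosed (I : Set R) := by
    have h2 := AddSubgroup.isClosed_of_isOpen (G := R) I.toAddSubgroup (by simpa using hIo)
    simpa using h2
  have hsub : (E ⁻¹' s)ᶜ ⊆
      ⋃ v ∈ {v : W | u v ∉ (I : Set R)}, {z : Z | u v * f z ∉ topJacobson R} := by
    intro z hz
    simp only [Set.mem_compl_iff, Set.mem_preimage] at hz
    by_contra hzn
    apply hz
    apply hIs
    have hzn' : ∀ v : W, u v ∉ (I : Set R) → u v * f z ∈ topJacobson R := by
      intro v hv
      by_contra hbad
      exact hzn (Set.mem_biUnion hv hbad)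
    have hsumz : HasSum (fun v => u v * E z) (E z) := by simpa using huSum.mul_right (E z)
    refine LiftAux.hasSum_mem_submodule hsumz I hIc fun v => ?_
    by_cases hva : u v * f z ∈ topJacobson R
    · rw [hE3 z v hva]; exact I.zero_mem
    · have hvI : u v ∈ (I : Set R) := by
        by_contra hvn
        exact hva (hzn' v hvn)
      simpa [op_smul_eq_mul] using I.smul_mem (op (E z)) hvI
  exact ((hG.biUnion fun v _ => hfinRow v).subset hsub)
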